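/- For every complex scalar s with |s| ≤ 1, the complex n×n matrix ΦᵀD(−I + sγP)Φ is Hurwitz, i.e., every eigenvalue of ΦᵀD(−I + sγP)Φ has strictly negative real part. -/

import Mathlib

open Matrix BigOperators

lemma mulVec_inj_of_rank (N n : ℕ) (Φ : Matrix (Fin N) (Fin n) ℝ)
    (hΦ : Φ.rank = n) : ∀ w : Fin n → ℝ, Φ.mulVec w = 0 → w = 0 := by
  have hk := Φ.mulVecLin.finrank_range_add_finrank_ker
  rw [show Matrix.rank Φ = Module.finrank ℝ (LinearMap.range Φ.mulVecLin) from rfl] at hΦ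
  rw [hΦ, Module.finrank_pi] at hk
  simp only [Fintype.card_fin] at hk
  have h0 : Module.finrank ℝ (LinearMap.ker Φ.mulVecLin) = 0 := by omega
  have hker : LinearMap.ker Φ.mulVecLin = ⊥ := Submodule.finrank_eq_zero.mp h0
  intro w hw
  have : Φ.mulVecLin w = 0 := by simpa [Matrix.mulVecLin] using hw
  exact (LinearMap.ker_eq_bot.mp hker) (by simpa using this)

theorem phi_D_shifted_stochastic_phi_is_Hurwitz
    (N n : ℕ) (hN : 0 < N) (hn : 0 < n) (hnN : n ≤ N)
    (P : Matrix (Fin N) (Fin N) ℝ) (d : Fin N → ℝ) (γ : ℝ)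
    (Φ : Matrix (Fin N) (Fin n) ℝ)
    (hPnonneg : ∀ i j, 0 ≤ P i j)
    (hProw : ∀ i, ∑ j, P i j = 1)
    (hdpos : ∀ s, 0 < d s)
    (hdsum : ∑ s, d s = 1)
    (hstat : Matrix.vecMul d P = d)
    (hγ0 : 0 < γ) (hγ1 : γ < 1)
    (hΦ : Φ.rank = n)
    (s : ℂ) (hs : ‖s‖ ≤ 1) :
    let Pc : Matrix (Fin N) (Fin N) ℂ := P.map (fun x : ℝ => (x : ℂ))
    let Dc : Matrix (Fin N) (Fin N) ℂ := Matrix.diagonal (fun i => ((d i : ℂ)))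
    let Φc : Matrix (Fin N) (Fin n) ℂ := Φ.map (fun x : ℝ => (x : ℂ))
    let M : Matrix (Fin n) (Fin n) ℂ := Φcᵀ * Dc * (-1 + (s * (γ : ℂ)) • Pc) * Φc
    ∀ (μ : ℂ) (v : Fin n → ℂ), v ≠ 0 → M.mulVec v = μ • v → μ.re < 0 := by
  intro Pc Dc Φc M μ v hv hMv
  classical
  set a : ℂ := s * (γ : ℂ) with ha
  set x : Fin N → ℂ := Φc.mulVec v with hxdef
  -- x ≠ 0
  have hxne : x ≠ 0 := by
    intro h0
    apply hv
    have hre : Φ.mulVec (fun j => (v j).re) = 0 := by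
      funext i
      have h1 : x i = 0 := congrFun h0 i
      have := congrArg Complex.re h1
      simpa [hxdef, Matrix.mulVec, dotProduct, Φc, Complex.re_sum] using this
    have him : Φ.mulVec (fun j => (v j).im) = 0 := by
      funext i
      have h1 : x i = 0 := congrFun h0 i
      have := congrArg Complex.im h1
      simpa [hxdef, Matrix.mulVec, dotProduct, Φc, Complex.im_sum] using this
    have h2 := mulVec_inj_of_rank N n Φ hΦ _ hre
    have h3 := mulVec_inj_of_rank N n Φ hΦ _ him
    funext j
    exact Complex.ext (congrFun h2 j) (congrFun h3 j)
  set V : ℝ := ∑ i, Complex.normSq (v i) with hV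
  set S : ℝ := ∑ i, d i * Complex.normSq (x i) with hS
  set T : ℂ := ∑ i, (d i : ℂ) * (starRingEnd ℂ) (x i) * (∑ j, (P i j : ℂ) * x j) with hT
  have hc1 : star v ⬝ᵥ M.mulVec v = μ * (V : ℂ) := by
    rw [hMv]
    simp only [dotProduct, Pi.smul_apply, Pi.star_apply, smul_eq_mul, hV]
    push_cast
    rw [Finset.mul_sum]
    refine Finset.sum_congr rfl fun i _ => ?_
    rw [Complex.normSq_eq_conj_mul_self,
      show star (v i) = (starRingEnd ℂ) (v i) from rfl]
    ring
  have hstarx : Φc *ᵥ (star v) = star x := by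
    funext i
    simp only [hxdef, Matrix.mulVec, dotProduct, Pi.star_apply, star_sum, Φc]
    refine Finset.sum_congr rfl fun j _ => ?_
    simp [Matrix.map_apply]
  have hc2 : star v ⬝ᵥ M.mulVec v = -(S : ℂ) + a * T := by
    have hmv : M.mulVec v = Φcᵀ *ᵥ (Dc *ᵥ ((-1 + a • Pc) *ᵥ x)) := by
      simp only [M, hxdef, ha, ← Matrix.mulVec_mulVec]
    rw [hmv, dotProduct_mulVec, Matrix.vecMul_transpose, hstarx,
      Matrix.add_mulVec, Matrix.neg_mulVec, Matrix.one_mulVec, Matrix.smul_mulVec]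
    have hD : Dc *ᵥ (-x + a • (Pc *ᵥ x)) = fun i => (d i : ℂ) * (-x i + a * (Pc *ᵥ x) i) := by
      funext i
      simp [Dc, Matrix.mulVec_diagonal]
    rw [hD, hS, hT]
    simp only [dotProduct, Pi.star_apply]
    push_cast
    rw [Finset.mul_sum, ← Finset.sum_neg_distrib, ← Finset.sum_add_distrib]
    refine Finset.sum_congr rfl fun i _ => ?_
    have hPcv : (Pc *ᵥ x) i = ∑ j, ((P i j : ℂ)) * x j := by
      simp [Pc, Matrix.mulVec, dotProduct, Matrix.map_apply]
    rw [hPcv, Complex.normSq_eq_conj_mul_self,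
      show star (x i) = (starRingEnd ℂ) (x i) from rfl]
    ring
  -- column sums
  have hcol : ∀ j, ∑ i, d i * P i j = d j := by
    intro j
    have := congrFun hstat j
    simpa [Matrix.vecMul, dotProduct] using this
  -- bound |T| ≤ S
  have hT2 : T = ∑ i, ∑ j, ((d i * P i j : ℝ) : ℂ) * ((starRingEnd ℂ) (x i) * x j) := by
    rw [hT]
    refine Finset.sum_congr rfl fun i _ => ?_
    rw [Finset.mul_sum]
    refine Finset.sum_congr rfl fun j _ => ?_
    push_cast; ring
  have h1 : ‖T‖ ≤ ∑ i, ∑ j, (d i * P i j) * (‖x i‖ * ‖x j‖) := by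
    rw [hT2]
    refine (norm_sum_le _ _).trans (Finset.sum_le_sum fun i _ => ?_)
    refine (norm_sum_le _ _).trans (Finset.sum_le_sum fun j _ => ?_)
    rw [norm_mul, norm_mul, Complex.norm_real, Real.norm_eq_abs, Complex.norm_conj,
      abs_of_nonneg (mul_nonneg (hdpos i).le (hPnonneg i j))]
  have h2 : ∀ i j : Fin N, ‖x i‖ * ‖x j‖
      ≤ (Complex.normSq (x i) + Complex.normSq (x j)) / 2 := by
    intro i j
    nlinarith [sq_nonneg (‖x i‖ - ‖x j‖),
      Complex.sq_norm (x i), Complex.sq_norm (x j)]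
  have h3 : ∑ i, ∑ j, (d i * P i j) * ((Complex.normSq (x i) + Complex.normSq (x j)) / 2) = S := by
    have e1 : ∑ i : Fin N, ∑ j : Fin N, (d i * P i j) * (Complex.normSq (x i) / 2) = S / 2 := by
      rw [hS, Finset.sum_div]
      refine Finset.sum_congr rfl fun i _ => ?_
      have : ∀ j, (d i * P i j) * (Complex.normSq (x i) / 2)
          = P i j * (d i * Complex.normSq (x i) / 2) := fun j => by ring
      rw [Finset.sum_congr rfl (fun j _ => this j), ← Finset.sum_mul, hProw i, one_mul]
    have e2 : ∑ i : Fin N, ∑ j : Fin N, (d i * P i j) * (Complex.normSq (x j) / 2) = S / 2 := by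
      rw [Finset.sum_comm, hS, Finset.sum_div]
      refine Finset.sum_congr rfl fun j _ => ?_
      rw [← Finset.sum_mul, hcol j]
      ring
    calc ∑ i, ∑ j, (d i * P i j) * ((Complex.normSq (x i) + Complex.normSq (x j)) / 2)
        = (∑ i : Fin N, ∑ j : Fin N, (d i * P i j) * (Complex.normSq (x i) / 2))
          + ∑ i : Fin N, ∑ j : Fin N, (d i * P i j) * (Complex.normSq (x j) / 2) := by
          rw [← Finset.sum_add_distrib]
          refine Finset.sum_congr rfl fun i _ => ?_
          rw [← Finset.sum_add_distrib]
          exact Finset.sum_congr rfl fun j _ => by ring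
      _ = S := by rw [e1, e2]; ring
  have hTb : ‖T‖ ≤ S := by
    refine h1.trans ?_
    rw [← h3]
    refine Finset.sum_le_sum fun i _ => Finset.sum_le_sum fun j _ => ?_
    exact mul_le_mul_of_nonneg_left (h2 i j) (mul_nonneg (hdpos i).le (hPnonneg i j))
  -- positivity
  have hSpos : 0 < S := by
    obtain ⟨i, hi⟩ := Function.ne_iff.mp hxne
    refine Finset.sum_pos' (fun j _ => mul_nonneg (hdpos j).le (Complex.normSq_nonneg _))
      ⟨i, Finset.mem_univ i, mul_pos (hdpos i) (Complex.normSq_pos.mpr hi)⟩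
  have hVpos : 0 < V := by
    obtain ⟨i, hi⟩ := Function.ne_iff.mp hv
    refine Finset.sum_pos' (fun j _ => Complex.normSq_nonneg _)
      ⟨i, Finset.mem_univ i, Complex.normSq_pos.mpr hi⟩
  -- combine
  have heq : μ * (V : ℂ) = -(S : ℂ) + a * T := by rw [← hc1, hc2]
  have hre : μ.re * V = -S + (a * T).re := by
    have h := congrArg Complex.re heq
    rw [Complex.add_re, Complex.neg_re, Complex.ofReal_re,
      show (μ * (V : ℂ)).re = μ.re * V by simp [Complex.mul_re]] at h
    exact h
  have haT : (a * T).re ≤ γ * S := by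
    refine (Complex.re_le_norm _).trans ?_
    rw [norm_mul, ha, norm_mul, Complex.norm_real, Real.norm_eq_abs, abs_of_pos hγ0]
    calc ‖s‖ * γ * ‖T‖ ≤ 1 * γ * S := by
          refine mul_le_mul (mul_le_mul_of_nonneg_right hs hγ0.le) hTb
            (norm_nonneg _) (by positivity)
      _ = γ * S := by ring
  have hlt : μ.re * V < 0 := by
    rw [hre]
    nlinarith
  nlinarith
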